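/- Let ẙ₁,…,ẙ_N ∈ ℝ⁴ be unit vectors and k₁,…,k_N > 0. Suppose there exist indices i₁ ≠ i₂ with ẙ_{i₁,4} = ẙ_{i₂,4} = 0 such that ẙ̄_{i₁} and ẙ̄_{i₂} are linearly independent, and an index j₁ with ẙ_{j₁,4} ≠ 0 (Case 1 of the observability assumption: at least 2 vectorial and 1 position measurements). Then for every E ∈ SE(3), V(E) = 0 if and only if E = I₄; i.e. V has a unique global minimum at the identity. -/

import Mathlib

open Matrix BigOperators

noncomputable section

/-- The Euclidean norm of a vector in `ℝⁿ`. -/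
def enorm' {n : ℕ} (x : Fin n → ℝ) : ℝ := Real.sqrt (∑ i, x i ^ 2)

/-- Normalization of a vector: `x / |x|`. -/
def nrm {n : ℕ} (x : Fin n → ℝ) : Fin n → ℝ := (enorm' x)⁻¹ • x

/-- `R ∈ SO(3)`: rotation matrices. -/
def SO3 (R : Matrix (Fin 3) (Fin 3) ℝ) : Prop := Rᵀ * R = 1 ∧ R.det = 1

/-- The 4×4 block matrix `[[M, m],[0ᵀ, 0]]`. -/
def blk (M : Matrix (Fin 3) (Fin 3) ℝ) (m : Fin 3 → ℝ) : Matrix (Fin 4) (Fin 4) ℝ :=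
  fun i j =>
    if h : (i : ℕ) < 3 then
      if h' : (j : ℕ) < 3 then M ⟨i, h⟩ ⟨j, h'⟩ else m ⟨i, h⟩
    else 0

/-- The 4×4 block matrix `[[R, p],[0ᵀ, 1]]`. -/
def toSE3 (R : Matrix (Fin 3) (Fin 3) ℝ) (p : Fin 3 → ℝ) : Matrix (Fin 4) (Fin 4) ℝ :=
  fun i j =>
    if h : (i : ℕ) < 3 then
      if h' : (j : ℕ) < 3 then R ⟨i, h⟩ ⟨j, h'⟩ else p ⟨i, h⟩
    else if (j : ℕ) < 3 then 0 else 1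

/-- The Special Euclidean group SE(3), as a subset of `ℝ^{4×4}`. -/
def SE3 : Set (Matrix (Fin 4) (Fin 4) ℝ) := {X | ∃ R p, SO3 R ∧ X = toSE3 R p}

/-- The skew-symmetric matrix `ω_×` associated with the cross product by `ω`. -/
def crossMat (ω : Fin 3 → ℝ) : Matrix (Fin 3) (Fin 3) ℝ :=
  !![0, -ω 2, ω 1; ω 2, 0, -ω 0; -ω 1, ω 0, 0]

/-- The cross product on `ℝ³`. -/
def cross3 (u v : Fin 3 → ℝ) : Fin 3 → ℝ :=
  ![u 1 * v 2 - u 2 * v 1, u 2 * v 0 - u 0 * v 2, u 0 * v 1 - u 1 * v 0]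

/-- The Lie algebra se(3), as a subset of `ℝ^{4×4}`. -/
def se3 : Set (Matrix (Fin 4) (Fin 4) ℝ) := {A | ∃ ω V, A = blk (crossMat ω) V}

/-- The projection `P : ℝ^{4×4} → se(3)`:
`P([[M₁, m₂],[m₃ᵀ, m₄]]) = [[(M₁ − M₁ᵀ)/2, m₂],[0ᵀ, 0]]`. -/
def projP (M : Matrix (Fin 4) (Fin 4) ℝ) : Matrix (Fin 4) (Fin 4) ℝ :=
  fun i j =>
    if (i : ℕ) < 3 then (if (j : ℕ) < 3 then (M i j - M j i) / 2 else M i j) else 0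

/-- The trace (Frobenius) inner product `⟨M₁, M₂⟩ = tr(M₁ᵀ M₂)`. -/
def mip (M₁ M₂ : Matrix (Fin 4) (Fin 4) ℝ) : ℝ := (M₁ᵀ * M₂).trace

/-- First three components of a vector in `ℝ⁴`. -/
def vbar (x : Fin 4 → ℝ) : Fin 3 → ℝ := fun i => x (Fin.castSucc i)

/-- The vector `[v; c] ∈ ℝ⁴`. -/
def vec4 (v : Fin 3 → ℝ) (c : ℝ) : Fin 4 → ℝ := Fin.snoc v c

/-- The innovation term `Δ(X̂, Y) = −P(Σᵢ kᵢ (I₄ − eᵢeᵢᵀ) ẙᵢ eᵢᵀ)` where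
`eᵢ = X̂yᵢ/|X̂yᵢ|`. -/
def innov {N : ℕ} (k : Fin N → ℝ) (ystar y : Fin N → Fin 4 → ℝ)
    (Xh : Matrix (Fin 4) (Fin 4) ℝ) : Matrix (Fin 4) (Fin 4) ℝ :=
  -projP (∑ i, k i •
    ((1 - vecMulVec (nrm (Xh *ᵥ y i)) (nrm (Xh *ᵥ y i))) *
      vecMulVec (ystar i) (nrm (Xh *ᵥ y i))))

/- ============ auxiliary lemmas ============ -/

lemma sq_enorm {n : ℕ} (x : Fin n → ℝ) : enorm' x ^ 2 = ∑ i, x i ^ 2 :=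
  Real.sq_sqrt (Finset.sum_nonneg fun _ _ => sq_nonneg _)

lemma sum_sq_eq_zero {n : ℕ} {x : Fin n → ℝ} (h : ∑ i, x i ^ 2 = 0) : x = 0 := by
  have h3 := (Finset.sum_eq_zero_iff_of_nonneg (fun i _ => sq_nonneg (x i))).mp h
  funext i
  exact pow_eq_zero_iff (two_ne_zero).elim |>.mp (h3 i (Finset.mem_univ i))

lemma eq_of_enorm_sub_eq_zero {n : ℕ} {x y : Fin n → ℝ} (h : enorm' (x - y) = 0) : x = y := by
  have h2 : ∑ i, (x - y) i ^ 2 = 0 :=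
    Real.sqrt_eq_zero (Finset.sum_nonneg fun i _ => sq_nonneg ((x - y) i)) |>.mp h
  have := sum_sq_eq_zero h2
  funext i
  have := congrFun this i
  simpa [sub_eq_zero] using this

lemma enorm'_zero {n : ℕ} : enorm' (0 : Fin n → ℝ) = 0 := by simp [enorm']

lemma nrm_of_enorm_one {n : ℕ} {x : Fin n → ℝ} (h : enorm' x = 1) : nrm x = x := by
  simp [nrm, h]

lemma mulVec_norm_sq (R : Matrix (Fin 3) (Fin 3) ℝ) (hR : Rᵀ * R = 1) (v : Fin 3 → ℝ) :
    ∑ i, (R *ᵥ v) i ^ 2 = ∑ i, v i ^ 2 := by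
  have h1 : ∑ i, (R *ᵥ v) i ^ 2 = (R *ᵥ v) ⬝ᵥ (R *ᵥ v) := by
    simp [dotProduct, sq]
  have h2 : ∑ i, v i ^ 2 = v ⬝ᵥ v := by simp [dotProduct, sq]
  rw [h1, h2]
  calc (R *ᵥ v) ⬝ᵥ (R *ᵥ v) = ((v ᵥ* Rᵀ) ⬝ᵥ (R *ᵥ v)) := by rw [Matrix.vecMul_transpose]
    _ = v ⬝ᵥ ((Rᵀ * R) *ᵥ v) := by
        rw [Matrix.dotProduct_mulVec, Matrix.vecMul_vecMul, Matrix.dotProduct_mulVec]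
    _ = v ⬝ᵥ v := by rw [hR, Matrix.one_mulVec]

lemma last_eq_three : Fin.last 3 = (3 : Fin 4) := rfl

lemma val3 : ((3 : Fin 4) : ℕ) = 3 := rfl

lemma toSE3_aa (R : Matrix (Fin 3) (Fin 3) ℝ) (p : Fin 3 → ℝ) (i j : Fin 3) :
    toSE3 R p i.castSucc j.castSucc = R i j := by
  simp [toSE3, Fin.is_lt]

lemma toSE3_ab (R : Matrix (Fin 3) (Fin 3) ℝ) (p : Fin 3 → ℝ) (i : Fin 3) :
    toSE3 R p i.castSucc (Fin.last 3) = p i := by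
  simp [toSE3, Fin.is_lt, Fin.last, val3]

lemma toSE3_ba (R : Matrix (Fin 3) (Fin 3) ℝ) (p : Fin 3 → ℝ) (j : Fin 3) :
    toSE3 R p (Fin.last 3) j.castSucc = 0 := by
  simp [toSE3, Fin.last, val3]

lemma toSE3_bb (R : Matrix (Fin 3) (Fin 3) ℝ) (p : Fin 3 → ℝ) :
    toSE3 R p (Fin.last 3) (Fin.last 3) = 1 := by
  simp [toSE3, Fin.last, val3]

lemma toSE3_mv_bar (R : Matrix (Fin 3) (Fin 3) ℝ) (p : Fin 3 → ℝ) (y : Fin 4 → ℝ) (i : Fin 3) :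
    (toSE3 R p *ᵥ y) i.castSucc = (R *ᵥ vbar y) i + y (Fin.last 3) * p i := by
  simp [mulVec, dotProduct, Fin.sum_univ_castSucc, toSE3_aa, toSE3_ab, vbar, mul_comm]
  rw [← last_eq_three, toSE3_ab, mul_comm]

lemma toSE3_mv_last (R : Matrix (Fin 3) (Fin 3) ℝ) (p : Fin 3 → ℝ) (y : Fin 4 → ℝ) :
    (toSE3 R p *ᵥ y) (Fin.last 3) = y (Fin.last 3) := by
  simp [mulVec, dotProduct, Fin.sum_univ_castSucc, toSE3_ba, toSE3_bb]
  simp [toSE3]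

lemma toSE3_one : toSE3 1 0 = (1 : Matrix (Fin 4) (Fin 4) ℝ) := by
  ext i j
  rcases Fin.eq_castSucc_or_eq_last i with ⟨i', rfl⟩ | rfl <;>
    rcases Fin.eq_castSucc_or_eq_last j with ⟨j', rfl⟩ | rfl
  · rw [toSE3_aa]
    simp [Matrix.one_apply, Fin.castSucc_inj]
  · rw [toSE3_ab]
    exact (Matrix.one_apply_ne (Fin.castSucc_lt_last i').ne).symm
  · rw [toSE3_ba]
    exact (Matrix.one_apply_ne (Fin.castSucc_lt_last j').ne').symm
  · rw [toSE3_bb]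
    exact (Matrix.one_apply_eq _).symm

lemma transpose_mv_cross (A : Matrix (Fin 3) (Fin 3) ℝ) (u v : Fin 3 → ℝ) :
    Aᵀ *ᵥ cross3 (A *ᵥ u) (A *ᵥ v) = A.det • cross3 u v := by
  funext i
  fin_cases i <;>
    simp [cross3, mulVec, dotProduct, Fin.sum_univ_three, Matrix.det_fin_three,
      Matrix.transpose_apply] <;> ring

lemma cross_cross_self (u v : Fin 3 → ℝ) :
    cross3 u (cross3 u v) = (u ⬝ᵥ v) • u - (u ⬝ᵥ u) • v := by
  funext i
  fin_cases i <;>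
    simp [cross3, dotProduct, Fin.sum_univ_three] <;> ring

lemma det_rows_cross (u v : Fin 3 → ℝ) :
    (Matrix.of ![u, v, cross3 u v]).det = ∑ i, cross3 u v i ^ 2 := by
  simp [Matrix.det_fin_three, cross3, Fin.sum_univ_three]; ring

lemma cross3_antisym (u v : Fin 3 → ℝ) : cross3 v u = -cross3 u v := by
  funext i; fin_cases i <;> simp [cross3] <;> ring

lemma cross3_zero_right (v : Fin 3 → ℝ) : cross3 v 0 = 0 := by
  funext i; fin_cases i <;> simp [cross3]

lemma rot_fix_two {R : Matrix (Fin 3) (Fin 3) ℝ} (hR : Rᵀ * R = 1) (hdet : R.det = 1)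
    {u v : Fin 3 → ℝ} (hli : LinearIndependent ℝ ![u, v])
    (hu : R *ᵥ u = u) (hv : R *ᵥ v = v) : R = 1 := by
  obtain ⟨hv0, hav⟩ := linearIndependent_fin2.mp hli
  simp only [Matrix.cons_val_one, Matrix.head_cons, Matrix.cons_val_zero] at hv0 hav
  set w := cross3 u v with hwdef
  have hw : R *ᵥ w = w := by
    have h1 : Rᵀ *ᵥ w = w := by
      have h := transpose_mv_cross R u v
      rwa [hu, hv, hdet, one_smul] at h
    have hRRT : R * Rᵀ = 1 := by rwa [mul_eq_one_comm] at hR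
    calc R *ᵥ w = R *ᵥ (Rᵀ *ᵥ w) := by rw [h1]
      _ = (R * Rᵀ) *ᵥ w := by rw [Matrix.mulVec_mulVec]
      _ = w := by rw [hRRT, Matrix.one_mulVec]
  have hwne : w ≠ 0 := by
    intro hw0
    have hvu : cross3 v u = 0 := by rw [cross3_antisym, ← hwdef, hw0, neg_zero]
    have hcc := cross_cross_self v u
    rw [hvu, cross3_zero_right] at hcc
    have hvv : v ⬝ᵥ v ≠ 0 := fun h => hv0 (dotProduct_self_eq_zero.mp h)
    have h2 : (v ⬝ᵥ u) • v = (v ⬝ᵥ v) • u := sub_eq_zero.mp hcc.symm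
    have hueq : ((v ⬝ᵥ v)⁻¹ * (v ⬝ᵥ u)) • v = u := by
      rw [mul_smul, h2, smul_smul, inv_mul_cancel₀ hvv, one_smul]
    exact hav _ hueq
  have hdetN : (Matrix.of ![u, v, w]).det ≠ 0 := by
    rw [det_rows_cross]
    intro h
    exact hwne (sum_sq_eq_zero h)
  have key : ∀ (x : Fin 3 → ℝ), R *ᵥ x = x →
      ∀ j, x 0 * R j 0 + x 1 * R j 1 + x 2 * R j 2 = x j := by
    intro x hx j
    have := congrFun hx j
    simp [Matrix.mulVec, dotProduct, Fin.sum_univ_three] at this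
    linarith
  have hNR : Matrix.of ![u, v, w] * Rᵀ = Matrix.of ![u, v, w] := by
    ext i j
    fin_cases i <;>
      simp [Matrix.mul_apply, Fin.sum_univ_three, Matrix.transpose_apply] <;>
      first
        | exact key u hu j
        | exact key v hv j
        | exact key w hw j
  have hRT : Rᵀ = 1 := by
    have hN := (Matrix.of ![u, v, w]).nonsing_inv_mul (by simpa using hdetN)
    calc Rᵀ = 1 * Rᵀ := (one_mul _).symm
      _ = ((Matrix.of ![u, v, w])⁻¹ * Matrix.of ![u, v, w]) * Rᵀ := by rw [hN]
      _ = (Matrix.of ![u, v, w])⁻¹ * (Matrix.of ![u, v, w] * Rᵀ) := by rw [Matrix.mul_assoc]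
      _ = (Matrix.of ![u, v, w])⁻¹ * Matrix.of ![u, v, w] := by rw [hNR]
      _ = 1 := hN
  calc R = Rᵀᵀ := (Matrix.transpose_transpose R).symm
    _ = 1ᵀ := by rw [hRT]
    _ = 1 := Matrix.transpose_one

/-- under Case 1 of the observability assumption (at least two vectorial
and one position measurement), the cost `V(E) = (1/2)Σᵢ kᵢ |Eẙᵢ/|Eẙᵢ| − ẙᵢ|²` vanishes
iff `E = I₄`. -/
theorem lyapunov_unique_minimum_case1 {N : ℕ} (ystar : Fin N → Fin 4 → ℝ)
    (hunit : ∀ i, enorm' (ystar i) = 1) (k : Fin N → ℝ) (hk : ∀ i, 0 < k i)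
    (i₁ i₂ j₁ : Fin N) (hne : i₁ ≠ i₂)
    (h4a : ystar i₁ 3 = 0) (h4b : ystar i₂ 3 = 0)
    (hli : LinearIndependent ℝ ![vbar (ystar i₁), vbar (ystar i₂)])
    (hj : ystar j₁ 3 ≠ 0)
    (E : Matrix (Fin 4) (Fin 4) ℝ) (hE : E ∈ SE3) :
    (1 / 2 : ℝ) * ∑ i, k i * (enorm' (nrm (E *ᵥ ystar i) - ystar i)) ^ 2 = 0 ↔ E = 1 := by
  obtain ⟨R, p, ⟨hRorth, hRdet⟩, rfl⟩ := hE
  constructor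
  · intro hV
    have hsum : ∑ i, k i * (enorm' (nrm (toSE3 R p *ᵥ ystar i) - ystar i)) ^ 2 = 0 := by
      linarith
    have hterm : ∀ i, nrm (toSE3 R p *ᵥ ystar i) = ystar i := by
      intro i
      have h0 : k i * (enorm' (nrm (toSE3 R p *ᵥ ystar i) - ystar i)) ^ 2 = 0 :=
        (Finset.sum_eq_zero_iff_of_nonneg
          (fun i _ => mul_nonneg (hk i).le (sq_nonneg _))).mp hsum i (Finset.mem_univ i)
      have h1 : (enorm' (nrm (toSE3 R p *ᵥ ystar i) - ystar i)) ^ 2 = 0 := by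
        rcases mul_eq_zero.mp h0 with h | h
        · exact absurd h (hk i).ne'
        · exact h
      exact eq_of_enorm_sub_eq_zero (pow_eq_zero_iff (two_ne_zero).elim |>.mp h1)
    have hfix : ∀ i, ystar i 3 = 0 → R *ᵥ vbar (ystar i) = vbar (ystar i) := by
      intro i h3
      have h3' : ystar i (Fin.last 3) = 0 := by rw [last_eq_three]; exact h3
      have hsumsq : ∑ j, (toSE3 R p *ᵥ ystar i) j ^ 2 = ∑ j, ystar i j ^ 2 := by
        rw [Fin.sum_univ_castSucc (f := fun j => (toSE3 R p *ᵥ ystar i) j ^ 2),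
            Fin.sum_univ_castSucc (f := fun j => ystar i j ^ 2)]
        have hL : ∀ j : Fin 3, (toSE3 R p *ᵥ ystar i) j.castSucc = (R *ᵥ vbar (ystar i)) j := by
          intro j; rw [toSE3_mv_bar, h3', zero_mul, add_zero]
        simp only [hL, toSE3_mv_last, h3']
        rw [mulVec_norm_sq R hRorth]
        rfl
      have henorm : enorm' (toSE3 R p *ᵥ ystar i) = 1 := by
        unfold enorm'
        rw [hsumsq]
        exact hunit i
      have hEy : toSE3 R p *ᵥ ystar i = ystar i := by
        rw [← nrm_of_enorm_one henorm]; exact hterm i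
      funext j
      have hc := congrFun hEy j.castSucc
      rw [toSE3_mv_bar, h3', zero_mul, add_zero] at hc
      exact hc
    have hR1 : R = 1 := rot_fix_two hRorth hRdet hli (hfix i₁ h4a) (hfix i₂ h4b)
    subst hR1
    have hylast : ystar j₁ (Fin.last 3) ≠ 0 := hj
    have hn := hterm j₁
    have hc : (enorm' (toSE3 1 p *ᵥ ystar j₁))⁻¹ * ystar j₁ (Fin.last 3) =
        ystar j₁ (Fin.last 3) := by
      have hcc := congrFun hn (Fin.last 3)
      rw [nrm, Pi.smul_apply, toSE3_mv_last] at hcc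
      simpa [toSE3_mv_last] using hcc
    have hc1 : (enorm' (toSE3 1 p *ᵥ ystar j₁))⁻¹ = 1 :=
      mul_right_cancel₀ hylast (by rw [hc, one_mul])
    have hEy : toSE3 1 p *ᵥ ystar j₁ = ystar j₁ := by
      have := hn
      rwa [nrm, hc1, one_smul] at this
    have hp : p = 0 := by
      funext j
      have hcj := congrFun hEy j.castSucc
      rw [toSE3_mv_bar, Matrix.one_mulVec] at hcj
      have hvb : vbar (ystar j₁) j = ystar j₁ j.castSucc := rfl
      rw [hvb] at hcj
      have hz : ystar j₁ (Fin.last 3) * p j = 0 := by linarith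
      rcases mul_eq_zero.mp hz with h | h
      · exact absurd h hylast
      · exact h
    rw [hp]
    exact toSE3_one
  · intro h1
    rw [h1]
    have hz : ∀ i, nrm (ystar i) - ystar i = 0 := by
      intro i
      rw [nrm_of_enorm_one (hunit i), sub_self]
    simp [hz, enorm'_zero]
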